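/- arXiv:2605.07506 — 2 statements merged into one kernel-verified Lean document; each statement's English description precedes it below -/
import Mathlib

section
/- Let ψ(z) = λ z^n with λ ∈ ℂ \ {0}, n ≥ 1, and φ(z) = a z + b with |a| + |b| < 1 and |a| < |b|. Then D_{ψ,φ,n} is bounded on H²(𝔻) but not posinormal. -/
open Complex Metric
open scoped InnerProductSpace

noncomputable section

/-- The Hardy space `H²(𝔻)`, modeled as the Hilbert space of square-summable
Taylor coefficient sequences. -/
abbrev H2 : Type := lp (fun _ : ℕ => ℂ) 2

/-- The analytic function on the unit disk represented by an element of `H²`. -/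
noncomputable def H2.toFun (f : H2) (z : ℂ) : ℂ := ∑' k, f k * z ^ k

/-- `T` is posinormal if `T T* = T* P T` for some positive operator `P`. -/
def Posinormal {H : Type*} [NormedAddCommGroup H] [InnerProductSpace ℂ H] [CompleteSpace H]
    (T : H →L[ℂ] H) : Prop :=
  ∃ P : H →L[ℂ] H, P.IsPositive ∧
    T ∘L ContinuousLinearMap.adjoint T = ContinuousLinearMap.adjoint T ∘L P ∘L T

/-- `T` realizes the weighted composition-differentiation operator `D_{ψ,φ,n}` on `H²`. -/
def IsWCD (ψ φ : ℂ → ℂ) (n : ℕ) (T : H2 →L[ℂ] H2) : Prop :=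
  ∀ f : H2, ∀ z ∈ ball (0 : ℂ) 1,
    H2.toFun (T f) z = ψ z * iteratedDeriv n (H2.toFun f) (φ z)

namespace St17

lemma sum_poly_geo (m : ℕ) {r : ℝ} (h0 : 0 < r) (h1 : r < 1) :
    Summable (fun k : ℕ => (k + 1 : ℝ) ^ m * r ^ k) := by
  have h : Summable (fun k : ℕ => (k : ℝ) ^ m * r ^ k) :=
    summable_pow_mul_geometric_of_norm_lt_one m (by rwa [Real.norm_eq_abs, abs_of_pos h0])
  have h2 : Summable (fun k : ℕ => ((k + 1 : ℕ) : ℝ) ^ m * r ^ (k + 1)) :=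
    ((summable_nat_add_iff 1).mpr h)
  have h3 := h2.mul_left r⁻¹
  refine h3.congr fun k => ?_
  push_cast
  field_simp [h0.ne']
  ring

lemma sum_poly_geo' {c : ℕ → ℂ} {C : ℝ} {m : ℕ} (hc : ∀ k, ‖c k‖ ≤ C * (k + 1 : ℝ) ^ m)
    {r : ℝ} (h0 : 0 < r) (h1 : r < 1) :
    Summable (fun k : ℕ => ‖c k‖ * r ^ k) := by
  refine Summable.of_nonneg_of_le (fun k => by positivity)
    (fun k => ?_) (((sum_poly_geo m h0 h1).mul_left C))
  calc ‖c k‖ * r ^ k ≤ (C * (k+1:ℝ)^m) * r ^ k := by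
        apply mul_le_mul_of_nonneg_right (hc k) (by positivity)
    _ = C * ((k+1:ℝ)^m * r^k) := by ring

lemma normNat1 (k : ℕ) : ‖((k : ℂ) + 1)‖ = (k : ℝ) + 1 := by
  have h : ((k : ℂ) + 1) = ((k + 1 : ℕ) : ℂ) := by push_cast; ring
  rw [h, RCLike.norm_natCast]; push_cast; ring

def PG (c : ℕ → ℂ) : Prop := ∃ C : ℝ, ∃ m : ℕ, ∀ k, ‖c k‖ ≤ C * (k + 1 : ℝ) ^ m

lemma PG.shift {c : ℕ → ℂ} (h : PG c) : PG (fun k => ((k : ℂ) + 1) * c (k + 1)) := by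
  obtain ⟨C, m, hC⟩ := h
  have hC0 : 0 ≤ C := le_trans (by positivity : (0:ℝ) ≤ ‖c 0‖) (by simpa using hC 0)
  refine ⟨C * 2 ^ (m + 1), m + 1, fun k => ?_⟩
  rw [norm_mul, normNat1]
  have h2 : ‖c (k + 1)‖ ≤ C * ((k : ℝ) + 2) ^ m := by
    have h3 := hC (k + 1)
    push_cast at h3
    have e : ((k : ℝ) + 1 + 1) = ((k : ℝ) + 2) := by ring
    rwa [e] at h3
  have hk2 : ((k : ℝ) + 2) ^ m ≤ (2 * ((k : ℝ) + 1)) ^ m :=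
    pow_le_pow_left₀ (by positivity) (by linarith) m
  calc ((k : ℝ) + 1) * ‖c (k + 1)‖ ≤ ((k : ℝ) + 1) * (C * (2 * ((k : ℝ) + 1)) ^ m) := by
        apply mul_le_mul_of_nonneg_left _ (by positivity)
        exact le_trans h2 (mul_le_mul_of_nonneg_left hk2 hC0)
    _ = C * 2 ^ (m + 1) * ((k : ℝ) + 1) ^ (m + 1) / 2 := by rw [mul_pow]; ring
    _ ≤ C * 2 ^ (m + 1) * ((k : ℝ) + 1) ^ (m + 1) := by
        have : (0:ℝ) ≤ C * 2 ^ (m + 1) * ((k : ℝ) + 1) ^ (m + 1) := by positivity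
        linarith

lemma PG.summable {c : ℕ → ℂ} (h : PG c) {r : ℝ} (h0 : 0 < r) (h1 : r < 1) :
    Summable (fun k : ℕ => ‖c k‖ * r ^ k) := by
  obtain ⟨C, m, hC⟩ := h
  exact sum_poly_geo' hC h0 h1

lemma hasDerivAt_series {c : ℕ → ℂ} (hc : PG c) {x : ℂ} (hx : ‖x‖ < 1) :
    HasDerivAt (fun z : ℂ => ∑' k, c k * z ^ k)
      (∑' k : ℕ, ((k : ℂ) + 1) * c (k + 1) * x ^ k) x := by
  set r : ℝ := (1 + ‖x‖) / 2 with hr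
  have hx0 : 0 ≤ ‖x‖ := norm_nonneg x
  have h0 : 0 < r := by positivity
  have h1 : r < 1 := by rw [hr]; linarith
  have hxr : ‖x‖ < r := by rw [hr]; linarith
  have hsum : Summable (fun k : ℕ => ‖c k‖ * (k : ℝ) * r ^ (k - 1)) := by
    rw [← summable_nat_add_iff 1]
    have hS := (hc.shift).summable h0 h1
    refine hS.congr fun k => ?_
    rw [norm_mul, normNat1]
    simp only [Nat.add_sub_cancel]
    push_cast
    ring
  have key := hasDerivAt_tsum_of_isPreconnected hsum (isOpen_ball (x := (0:ℂ)) (ε := r))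
    (convex_ball (0:ℂ) r).isPreconnected
    (g := fun k z => c k * z ^ k) (g' := fun k z => c k * ((k : ℂ) * z ^ (k - 1)))
    (fun k y _ => (hasDerivAt_pow k y).const_mul (c k))
    (fun k y hy => ?_) (mem_ball_self h0) ?_ (by simpa using hxr)
  · refine key.congr_deriv ?_
    rw [← (Nat.succ_injective.tsum_eq
      (f := fun k : ℕ => c k * ((k : ℂ) * x ^ (k - 1))) ?_)]
    · exact tsum_congr fun k => by push_cast [Nat.succ_eq_add_one, Nat.add_sub_cancel]; ring
    · intro k hk
      rcases k with _ | k
      · simp [Function.mem_support] at hk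
      · exact ⟨k, rfl⟩
  · rw [norm_mul, norm_mul, norm_pow]
    have hy' : ‖y‖ ≤ r := le_of_lt (by simpa using hy)
    have hyp : ‖y‖ ^ (k - 1) ≤ r ^ (k - 1) := pow_le_pow_left₀ (norm_nonneg _) hy' _
    have hnk : ‖(k : ℂ)‖ = (k : ℝ) := RCLike.norm_natCast k
    rw [hnk]
    calc ‖c k‖ * ((k : ℝ) * ‖y‖ ^ (k-1)) ≤ ‖c k‖ * ((k : ℝ) * r ^ (k-1)) := by
          apply mul_le_mul_of_nonneg_left _ (norm_nonneg _)
          exact mul_le_mul_of_nonneg_left hyp (by positivity)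
      _ = ‖c k‖ * (k : ℝ) * r ^ (k - 1) := by ring
  · apply summable_of_ne_finset_zero (s := {0})
    intro k hk
    simp only [Finset.mem_singleton] at hk
    simp [zero_pow hk]

def dIter (i : ℕ) (c : ℕ → ℂ) : ℕ → ℂ := fun k => ((k + i).descFactorial i : ℂ) * c (k + i)

lemma dIter_zero : dIter 0 c = c := by
  funext k; simp [dIter]

lemma dIter_succ (i : ℕ) :
    dIter (i + 1) c = fun k : ℕ => ((k : ℂ) + 1) * dIter i c (k + 1) := by
  funext k
  simp only [dIter]
  have h1 : (k + (i + 1)).descFactorial (i + 1) = (k + 1) * ((k + 1 + i).descFactorial i) := by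
    rw [show k + (i + 1) = (k + i) + 1 by ring, Nat.descFactorial_succ]
    congr 1
    · omega
    · congr 1; omega
  rw [h1]
  have h2 : k + (i + 1) = k + 1 + i := by ring
  rw [h2]
  push_cast
  ring

lemma PG.dIter' (h : PG c) (i : ℕ) : PG (dIter i c) := by
  induction i with
  | zero => rwa [dIter_zero]
  | succ i ih => rw [dIter_succ]; exact ih.shift

lemma iteratedDeriv_series (i : ℕ) (hc : PG c) :
    ∀ x : ℂ, ‖x‖ < 1 →
      iteratedDeriv i (fun z : ℂ => ∑' k, c k * z ^ k) x = ∑' k, dIter i c k * x ^ k := by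
  induction i with
  | zero =>
    intro x hx
    simp [dIter_zero]
  | succ i ih =>
    intro x hx
    rw [iteratedDeriv_succ]
    have hev : iteratedDeriv i (fun z : ℂ => ∑' k, c k * z ^ k)
        =ᶠ[nhds x] (fun y => ∑' k, dIter i c k * y ^ k) := by
      have hball : Metric.ball (0:ℂ) 1 ∈ nhds x := by
        apply isOpen_ball.mem_nhds
        simpa using hx
      filter_upwards [hball] with y hy
      exact ih y (by simpa using hy)
    rw [hev.deriv_eq]
    rw [(hasDerivAt_series (hc.dIter' i) hx).deriv]
    rw [dIter_succ]


lemma single_apply' (i : ℕ) (c : ℂ) (j : ℕ) :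
    (lp.single (E := fun _ : ℕ => ℂ) 2 i c) j = if j = i then c else 0 := by
  rw [lp.single_apply]
  split_ifs with h
  · subst h; exact Pi.single_eq_same _ _
  · exact Pi.single_eq_of_ne h _

lemma norm_single_one (i : ℕ) : ‖lp.single (E := fun _ : ℕ => ℂ) 2 i (1 : ℂ)‖ = 1 := by
  have := lp.norm_single (p := 2) (E := fun _ : ℕ => ℂ) (by norm_num) i (1 : ℂ)
  simpa using this

lemma coord_le_norm (g : H2) (k : ℕ) : ‖g k‖ ≤ ‖g‖ :=
  lp.norm_apply_le_norm (by norm_num) g k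

lemma eval_summable {z : ℂ} (hz : ‖z‖ < 1) (g : H2) :
    Summable (fun k : ℕ => g k * z ^ k) := by
  apply Summable.of_norm
  refine Summable.of_nonneg_of_le (fun k => by positivity) (fun k => ?_)
    ((summable_geometric_of_lt_one (norm_nonneg z) hz).mul_left ‖g‖)
  rw [norm_mul, norm_pow]
  exact mul_le_mul_of_nonneg_right (coord_le_norm g k) (by positivity)

/-- evaluation at a point of the disk, as a continuous linear functional. -/
def eval (z : ℂ) (hz : ‖z‖ < 1) : H2 →L[ℂ] ℂ :=
  LinearMap.mkContinuous
    { toFun := fun g => H2.toFun g z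
      map_add' := by
        intro g h
        simp only [H2.toFun]
        rw [← Summable.tsum_add (eval_summable hz g) (eval_summable hz h)]
        apply tsum_congr
        intro k
        rw [lp.coeFn_add]
        simp
        ring
      map_smul' := by
        intro c g
        simp only [H2.toFun, RingHom.id_apply]
        rw [smul_eq_mul, ← tsum_mul_left]
        apply tsum_congr
        intro k
        rw [lp.coeFn_smul]
        simp
        ring }
    (1 - ‖z‖)⁻¹
    (by
      intro g
      simp only [LinearMap.coe_mk, AddHom.coe_mk, H2.toFun]
      have hs : Summable (fun k : ℕ => ‖g‖ * ‖z‖ ^ k) :=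
        (summable_geometric_of_lt_one (norm_nonneg z) hz).mul_left ‖g‖
      have h1 : Summable (fun k : ℕ => ‖g k * z ^ k‖) := by
        refine Summable.of_nonneg_of_le (fun k => by positivity) (fun k => ?_) hs
        rw [norm_mul, norm_pow]
        exact mul_le_mul_of_nonneg_right (coord_le_norm g k) (by positivity)
      calc ‖∑' k, g k * z ^ k‖ ≤ ∑' k, ‖g k * z ^ k‖ := norm_tsum_le_tsum_norm h1
        _ ≤ ∑' k, ‖g‖ * ‖z‖ ^ k := by
            apply Summable.tsum_le_tsum _ h1 hs
            intro k
            rw [norm_mul, norm_pow]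
            exact mul_le_mul_of_nonneg_right (coord_le_norm g k) (by positivity)
        _ = ‖g‖ * (1 - ‖z‖)⁻¹ := by
            rw [tsum_mul_left, tsum_geometric_of_lt_one (norm_nonneg z) hz]
        _ = (1 - ‖z‖)⁻¹ * ‖g‖ := by ring)

lemma eval_apply {z : ℂ} (hz : ‖z‖ < 1) (g : H2) : eval z hz g = H2.toFun g z := rfl

lemma eval_single {z : ℂ} (hz : ‖z‖ < 1) (i : ℕ) (c : ℂ) :
    eval z hz (lp.single 2 i c) = c * z ^ i := by
  rw [eval_apply, H2.toFun]
  rw [tsum_eq_single i]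
  · rw [single_apply', if_pos rfl]
  · intro j hj
    rw [single_apply', if_neg hj, zero_mul]

/-- the coefficient of `z^(n+m)` in the expansion of `l zⁿ Dⁿ(z^k) ∘ (az+b)`. -/
def coefC (a b l : ℂ) (n k m : ℕ) : ℂ :=
  l * (k.descFactorial n : ℂ) * ((k - n).choose m : ℂ) * a ^ m * b ^ (k - n - m)

/-- the image of the basis vector `e_k` under `D_{ψ,φ,n}`. -/
def col (a b l : ℂ) (n k : ℕ) : H2 :=
  ∑ m ∈ Finset.range (k - n + 1), coefC a b l n k m • lp.single 2 (n + m) (1 : ℂ)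

lemma eval_col {z : ℂ} (hz : ‖z‖ < 1) (a b l : ℂ) (n k : ℕ) :
    eval z hz (col a b l n k) =
      l * (k.descFactorial n : ℂ) * z ^ n * (a * z + b) ^ (k - n) := by
  rw [col, map_sum]
  have h1 : ∀ m ∈ Finset.range (k - n + 1),
      eval z hz (coefC a b l n k m • lp.single 2 (n + m) (1 : ℂ))
        = l * (k.descFactorial n : ℂ) * z ^ n *
          ((a * z) ^ m * b ^ (k - n - m) * ((k - n).choose m : ℂ)) := by
    intro m _
    rw [map_smul, eval_single]
    simp only [smul_eq_mul, coefC]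
    rw [pow_add, mul_pow]
    ring
  rw [Finset.sum_congr rfl h1, ← Finset.mul_sum, ← add_pow]

lemma norm_col_le (a b l : ℂ) (n k : ℕ) :
    ‖col a b l n k‖ ≤ ‖l‖ * (k.descFactorial n : ℝ) * (‖a‖ + ‖b‖) ^ (k - n) := by
  calc ‖col a b l n k‖ ≤ ∑ m ∈ Finset.range (k - n + 1),
        ‖coefC a b l n k m • lp.single (E := fun _ : ℕ => ℂ) 2 (n + m) (1:ℂ)‖ :=
        norm_sum_le _ _
    _ = ∑ m ∈ Finset.range (k - n + 1),
        ‖l‖ * (k.descFactorial n : ℝ) * (((k-n).choose m : ℝ) * ‖a‖^m * ‖b‖^(k-n-m)) := by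
        apply Finset.sum_congr rfl
        intro m _
        rw [norm_smul, norm_single_one, mul_one, coefC]
        simp only [norm_mul, norm_pow, RCLike.norm_natCast]
        ring
    _ = ‖l‖ * (k.descFactorial n : ℝ) *
        (∑ m ∈ Finset.range (k - n + 1), ‖a‖^m * ‖b‖^(k-n-m) * ((k-n).choose m : ℝ)) := by
        rw [Finset.mul_sum]
        apply Finset.sum_congr rfl
        intro m _
        ring
    _ = ‖l‖ * (k.descFactorial n : ℝ) * (‖a‖ + ‖b‖) ^ (k - n) := by rw [← add_pow]



section
variable (a b l : ℂ) (n : ℕ)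

lemma summable_norm_col (h0 : 0 < ‖a‖ + ‖b‖) (h1 : ‖a‖ + ‖b‖ < 1) :
    Summable (fun k : ℕ => ‖col a b l n k‖) := by
  set ρ := ‖a‖ + ‖b‖ with hρ
  refine Summable.of_nonneg_of_le (fun k => norm_nonneg _) (fun k => ?_)
    (((sum_poly_geo n h0 h1).mul_left (‖l‖ * (ρ⁻¹) ^ n)))
  have hb := norm_col_le a b l n k
  rcases lt_or_ge k n with hk | hk
  · rw [Nat.descFactorial_eq_zero_iff_lt.mpr hk] at hb
    simp only [Nat.cast_zero, mul_zero, zero_mul] at hb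
    exact le_trans hb (by positivity)
  · refine le_trans hb ?_
    have h2 : (k.descFactorial n : ℝ) ≤ (k + 1 : ℝ) ^ n := by
      calc (k.descFactorial n : ℝ) ≤ ((k ^ n : ℕ) : ℝ) := by
            exact_mod_cast Nat.descFactorial_le_pow k n
        _ ≤ (k + 1 : ℝ) ^ n := by
            push_cast
            exact pow_le_pow_left₀ (by positivity) (by linarith) n
    have h3 : ρ ^ (k - n) = ρ ^ k * (ρ⁻¹) ^ n := by
      rw [pow_sub₀ _ (ne_of_gt h0) hk, inv_pow]
    rw [h3]
    calc ‖l‖ * (k.descFactorial n : ℝ) * (ρ ^ k * (ρ⁻¹) ^ n)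
        ≤ ‖l‖ * (k + 1 : ℝ) ^ n * (ρ ^ k * (ρ⁻¹) ^ n) := by
          apply mul_le_mul_of_nonneg_right _ (by positivity)
          exact mul_le_mul_of_nonneg_left h2 (norm_nonneg l)
      _ = ‖l‖ * (ρ⁻¹) ^ n * ((k + 1 : ℝ) ^ n * ρ ^ k) := by ring

variable {a b l n} in
lemma summable_smul_col (h0 : 0 < ‖a‖ + ‖b‖) (h1 : ‖a‖ + ‖b‖ < 1) (f : H2) :
    Summable (fun k : ℕ => f k • col a b l n k) := by
  apply Summable.of_norm
  refine Summable.of_nonneg_of_le (fun k => norm_nonneg _) (fun k => ?_)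
    ((summable_norm_col a b l n h0 h1).mul_left ‖f‖)
  rw [norm_smul]
  exact mul_le_mul_of_nonneg_right (coord_le_norm f k) (norm_nonneg _)

/-- The operator `D_{ψ,φ,n}` as a continuous linear map on `H²`. -/
def TO (h0 : 0 < ‖a‖ + ‖b‖) (h1 : ‖a‖ + ‖b‖ < 1) : H2 →L[ℂ] H2 :=
  LinearMap.mkContinuous
    { toFun := fun f => ∑' k, f k • col a b l n k
      map_add' := by
        intro f g
        rw [← Summable.tsum_add (summable_smul_col h0 h1 f) (summable_smul_col h0 h1 g)]
        apply tsum_congr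
        intro k
        rw [lp.coeFn_add, Pi.add_apply, add_smul]
      map_smul' := by
        intro c f
        rw [RingHom.id_apply, ← tsum_const_smul'']
        apply tsum_congr
        intro k
        rw [lp.coeFn_smul, Pi.smul_apply, smul_smul, smul_eq_mul]
      }
    (∑' k, ‖col a b l n k‖)
    (by
      intro f
      simp only [LinearMap.coe_mk, AddHom.coe_mk]
      have h2 : Summable (fun k : ℕ => ‖f k • col a b l n k‖) := by
        refine Summable.of_nonneg_of_le (fun k => norm_nonneg _) (fun k => ?_)
          ((summable_norm_col a b l n h0 h1).mul_left ‖f‖)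
        rw [norm_smul]
        exact mul_le_mul_of_nonneg_right (coord_le_norm f k) (norm_nonneg _)
      calc ‖∑' k, f k • col a b l n k‖ ≤ ∑' k, ‖f k • col a b l n k‖ :=
            norm_tsum_le_tsum_norm h2
        _ ≤ ∑' k, ‖col a b l n k‖ * ‖f‖ := by
            apply Summable.tsum_le_tsum _ h2 (((summable_norm_col a b l n h0 h1)).mul_right ‖f‖)
            intro k
            rw [norm_smul, mul_comm]
            exact mul_le_mul_of_nonneg_left (coord_le_norm f k)  (norm_nonneg _)
        _ = (∑' k, ‖col a b l n k‖) * ‖f‖ := tsum_mul_right)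

variable {a b l n}
variable (h0 : 0 < ‖a‖ + ‖b‖) (h1 : ‖a‖ + ‖b‖ < 1)

lemma TO_apply (f : H2) : TO a b l n h0 h1 f = ∑' k, f k • col a b l n k := rfl

lemma TO_single (k : ℕ) : TO a b l n h0 h1 (lp.single 2 k (1 : ℂ)) = col a b l n k := by
  rw [TO_apply, tsum_eq_single k]
  · rw [single_apply', if_pos rfl, one_smul]
  · intro j hj
    rw [single_apply', if_neg hj, zero_smul]

end

section
variable {a b l : ℂ} {n : ℕ}
variable (h0 : 0 < ‖a‖ + ‖b‖) (h1 : ‖a‖ + ‖b‖ < 1)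

lemma isWCD : IsWCD (fun z => l * z ^ n) (fun z => a * z + b) n (TO a b l n h0 h1) := by
  intro f z hzb
  have hz : ‖z‖ < 1 := by simpa [mem_ball_zero_iff] using hzb
  have hw : ‖a * z + b‖ < 1 := by
    have h2 : ‖a * z + b‖ ≤ ‖a‖ * ‖z‖ + ‖b‖ := by
      calc ‖a * z + b‖ ≤ ‖a * z‖ + ‖b‖ := norm_add_le _ _
        _ = ‖a‖ * ‖z‖ + ‖b‖ := by rw [norm_mul]
    nlinarith [norm_nonneg a, norm_nonneg z]
  have hPG : PG (⇑f) := ⟨‖f‖, 0, fun k => by simpa using coord_le_norm f k⟩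
  have hiter : iteratedDeriv n (H2.toFun f) (a * z + b)
      = ∑' k, dIter n (⇑f) k * (a * z + b) ^ k := by
    have he : H2.toFun f = fun w : ℂ => ∑' k, f k * w ^ k := rfl
    rw [he]
    exact iteratedDeriv_series n hPG _ hw
  have hL : H2.toFun (TO a b l n h0 h1 f) z
      = ∑' k, f k * (l * (k.descFactorial n : ℂ) * z ^ n * (a * z + b) ^ (k - n)) := by
    rw [← eval_apply hz, TO_apply, ContinuousLinearMap.map_tsum _ (summable_smul_col h0 h1 f)]
    apply tsum_congr
    intro k
    rw [map_smul, eval_col, smul_eq_mul]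
  rw [hL, hiter, ← tsum_mul_left]
  rw [← Function.Injective.tsum_eq (add_left_injective n)
    (f := fun k => f k * (l * (k.descFactorial n : ℂ) * z ^ n * (a * z + b) ^ (k - n))) ?_]
  · apply tsum_congr
    intro m
    simp only [Nat.add_sub_cancel, dIter]
    ring
  · intro k hk
    rcases le_or_gt n k with h | h
    · exact ⟨k - n, by simpa using Nat.sub_add_cancel h⟩
    · exact absurd (by simp [Nat.descFactorial_eq_zero_iff_lt.mpr h])
        (Function.mem_support.mp hk)
end



lemma eq_of_toFun_eq {g h : H2} (M : ℕ) (hg : ∀ i, M ≤ i → g i = 0) (hh : ∀ i, M ≤ i → h i = 0)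
    (he : ∀ z : ℂ, ‖z‖ < 1 → H2.toFun g z = H2.toFun h z) : g = h := by
  set q : Polynomial ℂ :=
    ∑ i ∈ Finset.range M, Polynomial.C (g i - h i) * Polynomial.X ^ i with hq
  have hqeval : ∀ z : ℂ, ‖z‖ < 1 → q.eval z = 0 := by
    intro z hz
    have e1 : H2.toFun g z = ∑ i ∈ Finset.range M, g i * z ^ i := by
      rw [H2.toFun]
      apply tsum_eq_sum
      intro i hi
      rw [hg i (by simpa using hi), zero_mul]
    have e2 : H2.toFun h z = ∑ i ∈ Finset.range M, h i * z ^ i := by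
      rw [H2.toFun]
      apply tsum_eq_sum
      intro i hi
      rw [hh i (by simpa using hi), zero_mul]
    have e3 := he z hz
    rw [e1, e2] at e3
    rw [hq]
    simp only [Polynomial.eval_finset_sum, Polynomial.eval_mul, Polynomial.eval_C,
      Polynomial.eval_pow, Polynomial.eval_X, sub_mul]
    rw [Finset.sum_sub_distrib, e3, sub_self]
  have hq0 : q = 0 := by
    apply Polynomial.eq_zero_of_infinite_isRoot
    refine Set.infinite_of_injective_forall_mem
      (f := fun t : ℕ => (((t : ℂ) + 2))⁻¹) ?_ ?_
    · intro s t hst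
      simp only [inv_inj] at hst
      have : (s : ℂ) = t := by linear_combination hst
      exact_mod_cast this
    · intro t
      simp only [Set.mem_setOf_eq, Polynomial.IsRoot]
      apply hqeval
      rw [norm_inv]
      have h2 : (2 : ℝ) ≤ ‖(t : ℂ) + 2‖ := by
        have : ((t : ℂ) + 2) = ((t + 2 : ℕ) : ℂ) := by push_cast; ring
        rw [this, RCLike.norm_natCast]
        exact_mod_cast Nat.le_add_left 2 t
      have h3 : (0:ℝ) < ‖(t : ℂ) + 2‖ := by linarith
      rw [inv_lt_one_iff₀]
      right
      linarith
  have hco : ∀ i, g i = h i := by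
    intro i
    rcases le_or_gt M i with hi | hi
    · rw [hg i hi, hh i hi]
    · have := congrArg (fun p => Polynomial.coeff p i) hq0
      simp only [hq, Polynomial.finset_sum_coeff, Polynomial.coeff_C_mul,
        Polynomial.coeff_X_pow, Polynomial.coeff_zero, mul_ite, mul_one, mul_zero] at this
      rw [Finset.sum_ite_eq (Finset.range M) i (fun j => g j - h j)] at this
      simp only [Finset.mem_range, hi, if_true] at this
      linear_combination this
  exact lp.ext (funext hco)


section
variable {a b l : ℂ} {n : ℕ}
variable (h0 : 0 < ‖a‖ + ‖b‖) (h1 : ‖a‖ + ‖b‖ < 1)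

lemma col_apply (k i : ℕ) :
    (col a b l n k) i
      = ∑ m ∈ Finset.range (k - n + 1), coefC a b l n k m * (if i = n + m then 1 else 0) := by
  rw [col, lp.coeFn_sum, Finset.sum_apply]
  apply Finset.sum_congr rfl
  intro m _
  rw [lp.coeFn_smul, Pi.smul_apply, single_apply', smul_eq_mul]

lemma col_apply_eq_zero {k i : ℕ} (hnk : n ≤ k) (hi : k + 1 ≤ i) :
    (col a b l n k) i = 0 := by
  rw [col_apply]
  apply Finset.sum_eq_zero
  intro m hm
  simp only [Finset.mem_range] at hm
  have : i ≠ n + m := by omega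
  rw [if_neg this, mul_zero]

lemma col_self : col a b l n n = (l * ((Nat.factorial n) : ℂ)) • lp.single 2 n (1 : ℂ) := by
  rw [col, Nat.sub_self, Finset.range_one, Finset.sum_singleton, Nat.add_zero]
  congr 1
  simp [coefC, Nat.descFactorial_self]

variable (h0 : 0 < ‖a‖ + ‖b‖) (h1 : ‖a‖ + ‖b‖ < 1) (hb : b ≠ 0) (n' : ℕ)

/-- the coefficients of the `n`-fold antiderivative of `n! (1 - z/b)^j`. -/
def γ (b : ℂ) (n j m : ℕ) : ℂ :=
  ((Nat.factorial n) : ℂ) * (j.choose m : ℂ) * (-b⁻¹) ^ m * (((n + m).descFactorial n : ℂ))⁻¹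

/-- test vectors on which the posinormality inequality blows up. -/
def xj (b : ℂ) (n j : ℕ) : H2 :=
  ∑ m ∈ Finset.range (j + 1), γ b n j m • lp.single 2 (n + m) (1 : ℂ)

lemma descFactorial_cast_ne_zero (n m : ℕ) : (((n + m).descFactorial n : ℂ)) ≠ 0 := by
  rw [Nat.cast_ne_zero]
  intro h
  rw [Nat.descFactorial_eq_zero_iff_lt] at h
  omega

lemma xj_apply_n (j : ℕ) : (xj b n j) n = 1 := by
  rw [xj, lp.coeFn_sum, Finset.sum_apply]
  have h2 : ∀ m ∈ Finset.range (j + 1),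
      (γ b n j m • lp.single (E := fun _ : ℕ => ℂ) 2 (n + m) (1:ℂ)) n
        = if m = 0 then γ b n j 0 else 0 := by
    intro m _
    rw [lp.coeFn_smul, Pi.smul_apply, single_apply', smul_eq_mul]
    rcases Nat.eq_zero_or_pos m with hm | hm
    · subst hm; simp
    · rw [if_neg (by omega), if_neg (by omega), mul_zero]
  rw [Finset.sum_congr rfl h2, Finset.sum_ite_eq' (Finset.range (j+1)) 0 (fun _ => γ b n j 0)]
  rw [if_pos (by simp)]
  rw [γ]
  simp only [Nat.choose_zero_right, Nat.cast_one, pow_zero, Nat.add_zero, mul_one,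
    Nat.descFactorial_self]
  exact mul_inv_cancel₀ (Nat.cast_ne_zero.mpr (Nat.factorial_ne_zero n))

lemma TO_xj (hb : b ≠ 0) (j : ℕ) :
    TO a b l n h0 h1 (xj b n j)
      = (l * ((Nat.factorial n) : ℂ) * (-(a / b)) ^ j) • lp.single 2 (n + j) (1 : ℂ) := by
  have hTx : TO a b l n h0 h1 (xj b n j)
      = ∑ m ∈ Finset.range (j + 1), γ b n j m • col a b l n (n + m) := by
    rw [xj, map_sum]
    apply Finset.sum_congr rfl
    intro m _
    rw [map_smul, TO_single h0 h1]
  apply eq_of_toFun_eq (n + j + 1)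
  · intro i hi
    rw [hTx, lp.coeFn_sum, Finset.sum_apply]
    apply Finset.sum_eq_zero
    intro m hm
    simp only [Finset.mem_range] at hm
    rw [lp.coeFn_smul, Pi.smul_apply, col_apply_eq_zero (by omega) (by omega), smul_zero]
  · intro i hi
    rw [lp.coeFn_smul, Pi.smul_apply, single_apply', if_neg (by omega), smul_zero]
  · intro z hz
    rw [← eval_apply hz, ← eval_apply hz, hTx, map_sum, map_smul, eval_single]
    have h2 : ∀ m ∈ Finset.range (j + 1),
        eval z hz (γ b n j m • col a b l n (n + m))
          = (l * ((Nat.factorial n) : ℂ) * z ^ n) *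
            ((-((a * z + b) * b⁻¹)) ^ m * (1 : ℂ) ^ (j - m) * (j.choose m : ℂ)) := by
      intro m _
      rw [map_smul, eval_col, smul_eq_mul, γ]
      have h3 : (n + m) - n = m := by omega
      rw [h3]
      have h4 : (((n + m).descFactorial n : ℂ))⁻¹ * ((n + m).descFactorial n : ℂ) = 1 :=
        inv_mul_cancel₀ (descFactorial_cast_ne_zero n m)
      have h5 : (-b⁻¹) ^ m * (a * z + b) ^ m = (-((a * z + b) * b⁻¹)) ^ m := by
        rw [← mul_pow]
        congr 1
        ring
      calc ((Nat.factorial n) : ℂ) * (j.choose m : ℂ) * (-b⁻¹) ^ m * (((n + m).descFactorial n : ℂ))⁻¹ *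
            (l * ((n + m).descFactorial n : ℂ) * z ^ n * (a * z + b) ^ m)
          = (l * ((Nat.factorial n) : ℂ) * z ^ n) * ((-b⁻¹) ^ m * (a * z + b) ^ m * (j.choose m : ℂ)) *
            ((((n + m).descFactorial n : ℂ))⁻¹ * ((n + m).descFactorial n : ℂ)) := by ring
        _ = (l * ((Nat.factorial n) : ℂ) * z ^ n) *
            ((-((a * z + b) * b⁻¹)) ^ m * (1 : ℂ) ^ (j - m) * (j.choose m : ℂ)) := by
            rw [h4, mul_one, h5, one_pow, mul_one]
    rw [Finset.sum_congr rfl h2, ← Finset.mul_sum, ← add_pow]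
    have h6 : -((a * z + b) * b⁻¹) + 1 = -(a / b) * z := by
      linear_combination -mul_inv_cancel₀ hb
    rw [h6, smul_eq_mul, mul_pow, pow_add]
    ring

lemma norm_TO_xj (hb : b ≠ 0) (j : ℕ) :
    ‖TO a b l n h0 h1 (xj b n j)‖ = ‖l‖ * ((Nat.factorial n) : ℝ) * (‖a‖ / ‖b‖) ^ j := by
  rw [TO_xj h0 h1 hb, norm_smul, norm_single_one, mul_one, norm_mul, norm_mul, norm_pow,
    norm_neg, norm_div, RCLike.norm_natCast]

end

end St17

open St17 in
/-- For `ψ(z) = λ zⁿ` (`λ ≠ 0`) and `φ(z) = a z + b` with `|a| + |b| < 1` and `|a| < |b|`,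
`D_{ψ,φ,n}` is bounded on `H²(𝔻)` but not posinormal. -/
theorem stmt17 (a b l : ℂ) (hl : l ≠ 0) (n : ℕ) (hn : 1 ≤ n)
    (hab : ‖a‖ + ‖b‖ < 1)
    (hab2 : ‖a‖ < ‖b‖) :
    ∃ T : H2 →L[ℂ] H2,
      IsWCD (fun z => l * z ^ n) (fun z => a * z + b) n T ∧ ¬ Posinormal T := by
  have hb0 : (0:ℝ) < ‖b‖ := lt_of_le_of_lt (norm_nonneg a) hab2
  have hb : b ≠ 0 := by simpa using hb0.ne'
  have h0 : 0 < ‖a‖ + ‖b‖ := by positivity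
  have h1 : ‖a‖ + ‖b‖ < 1 := hab
  refine ⟨TO a b l n h0 h1, isWCD h0 h1, ?_⟩
  rintro ⟨P, hP, heq⟩
  set T := TO a b l n h0 h1 with hT
  set q : ℝ := ‖a‖ / ‖b‖ with hq
  have hq0 : 0 ≤ q := by positivity
  have hq1 : q < 1 := (div_lt_one hb0).mpr hab2
  set K := ‖P‖ with hK
  have hK0 : 0 ≤ K := norm_nonneg P
  obtain ⟨j, hj⟩ := exists_pow_lt_of_lt_one (x := (K + 1)⁻¹) (by positivity)
    (pow_lt_one₀ hq0 hq1 (by norm_num) : q ^ 2 < 1)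
  set x := xj b n j with hx
  set u : H2 := lp.single 2 n (1 : ℂ) with hu
  set c : ℝ := ‖l‖ * ((Nat.factorial n) : ℝ) with hc
  have hc0 : 0 < c := by
    apply mul_pos (norm_pos_iff.mpr hl)
    exact_mod_cast Nat.factorial_pos n
  -- inner product of x with T u
  have hTu : T u = (l * ((Nat.factorial n) : ℂ)) • u := by rw [hT, hu, TO_single h0 h1, col_self]
  have hinner : ⟪x, T u⟫_ℂ = l * ((Nat.factorial n) : ℂ) := by
    rw [hTu, inner_smul_right, hu, lp.inner_single_right]
    rw [hx, xj_apply_n]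
    simp
  -- the adjoint bound
  set y := ContinuousLinearMap.adjoint T x with hy
  have h2 : c ≤ ‖y‖ := by
    have h3 : ⟪y, u⟫_ℂ = ⟪x, T u⟫_ℂ := ContinuousLinearMap.adjoint_inner_left T u x
    have h4 : ‖⟪y, u⟫_ℂ‖ ≤ ‖y‖ * ‖u‖ := norm_inner_le_norm y u
    rw [h3, hinner] at h4
    rw [hu, norm_single_one, mul_one] at h4
    calc c = ‖l * ((Nat.factorial n) : ℂ)‖ := by rw [norm_mul, RCLike.norm_natCast]
      _ ≤ ‖y‖ := h4
  have h5 : ‖y‖ ^ 2 ≤ K * ‖T x‖ ^ 2 := by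
    have h6 : ⟪y, y⟫_ℂ = ⟪T x, P (T x)⟫_ℂ := by
      calc ⟪y, y⟫_ℂ = ⟪x, T y⟫_ℂ := ContinuousLinearMap.adjoint_inner_left T y x
        _ = ⟪x, (T ∘L ContinuousLinearMap.adjoint T) x⟫_ℂ := rfl
        _ = ⟪x, (ContinuousLinearMap.adjoint T ∘L P ∘L T) x⟫_ℂ := by rw [heq]
        _ = ⟪x, ContinuousLinearMap.adjoint T (P (T x))⟫_ℂ := rfl
        _ = ⟪T x, P (T x)⟫_ℂ := ContinuousLinearMap.adjoint_inner_right T x (P (T x))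
    have h7 : ‖y‖ ^ 2 = RCLike.re ⟪y, y⟫_ℂ := (inner_self_eq_norm_sq y).symm
    rw [h7, h6]
    calc RCLike.re ⟪T x, P (T x)⟫_ℂ ≤ ‖⟪T x, P (T x)⟫_ℂ‖ := RCLike.re_le_norm _
      _ ≤ ‖T x‖ * ‖P (T x)‖ := norm_inner_le_norm _ _
      _ ≤ ‖T x‖ * (K * ‖T x‖) := by
          apply mul_le_mul_of_nonneg_left (P.le_opNorm (T x)) (norm_nonneg _)
      _ = K * ‖T x‖ ^ 2 := by ring
  have hTx : ‖T x‖ = c * q ^ j := by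
    rw [hT, hx, norm_TO_xj h0 h1 hb, hc, hq]
  -- combine
  have h8 : c ^ 2 ≤ K * (c * q ^ j) ^ 2 := by
    calc c ^ 2 ≤ ‖y‖ ^ 2 := pow_le_pow_left₀ hc0.le h2 2
      _ ≤ K * ‖T x‖ ^ 2 := h5
      _ = K * (c * q ^ j) ^ 2 := by rw [hTx]
  have h9 : (1:ℝ) ≤ K * (q ^ 2) ^ j := by
    have h10 : c ^ 2 * 1 ≤ c ^ 2 * (K * (q ^ 2) ^ j) := by
      calc c ^ 2 * 1 = c ^ 2 := by ring
        _ ≤ K * (c * q ^ j) ^ 2 := h8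
        _ = c ^ 2 * (K * (q ^ 2) ^ j) := by ring
    exact le_of_mul_le_mul_left (by simpa using h10) (by positivity)
  have h11 : K * (q ^ 2) ^ j < 1 := by
    calc K * (q ^ 2) ^ j ≤ K * (K + 1)⁻¹ := by
          apply mul_le_mul_of_nonneg_left hj.le hK0
      _ < 1 := by
          rw [← div_eq_mul_inv, div_lt_one (by positivity)]
          linarith
  linarith
end
end

section
/- Let ψ(z) = 2z and φ(z) = (z+2)/5 on 𝔻. Then D_{ψ,φ} f = ψ · (f' ∘ φ) is bounded on H²(𝔻), ψ(0) = 0, yet D_{ψ,φ} is not posinormal. Hence the vanishing conditions ψ^{(m)}(0) = 0 for 0 ≤ m < n are necessary but not sufficient for posinormality of D_{ψ,φ,n}. -/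
open Complex Metric Polynomial
open scoped InnerProductSpace ENNReal

noncomputable section

namespace Stage

lemma memlp_coeff (p : ℂ[X]) : Memℓp (fun k => p.coeff k) 2 := by
  apply memℓp_gen
  apply summable_of_ne_finset_zero (s := p.support)
  intro k hk
  simp [Polynomial.notMem_support_iff.mp hk]

/-- Embedding of polynomials into H². -/
def emb (p : ℂ[X]) : H2 := ⟨fun k => p.coeff k, memlp_coeff p⟩

@[simp] lemma emb_apply (p : ℂ[X]) (k : ℕ) : (emb p : ∀ _ : ℕ, ℂ) k = p.coeff k := rfl

lemma emb_add (p q : ℂ[X]) : emb (p + q) = emb p + emb q := by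
  apply Subtype.ext; funext k
  show (p+q).coeff k = (emb p : ∀ _:ℕ, ℂ) k + (emb q : ∀ _:ℕ, ℂ) k
  simp

lemma emb_smul (c : ℂ) (p : ℂ[X]) : emb (c • p) = c • emb p := by
  apply Subtype.ext; funext k
  show (c • p).coeff k = c • (emb p : ∀ _:ℕ, ℂ) k
  simp

lemma two_toReal : (2 : ℝ≥0∞).toReal = 2 := by norm_num

/-- ℓ² norm bounded by ℓ¹ norm of coefficients. -/
lemma emb_norm_le (p : ℂ[X]) (n : ℕ) (hn : p.natDegree < n) :
    ‖emb p‖ ≤ ∑ j ∈ Finset.range n, ‖p.coeff j‖ := by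
  have h0 : (0:ℝ) < (2 : ℝ≥0∞).toReal := by norm_num
  rw [lp.norm_eq_tsum_rpow h0]
  have hts : (∑' k, ‖(emb p : ∀ _:ℕ, ℂ) k‖ ^ (2:ℝ≥0∞).toReal)
      = ∑ j ∈ Finset.range n, ‖p.coeff j‖ ^ (2:ℝ≥0∞).toReal := by
    apply tsum_eq_sum
    intro k hk
    have : p.coeff k = 0 := by
      apply Polynomial.coeff_eq_zero_of_natDegree_lt
      have := Finset.mem_range.not.mp hk
      omega
    simp [this, two_toReal]
  rw [hts, two_toReal]
  have hsq : ∀ x : ℝ, x ^ (2:ℝ) = x ^ (2:ℕ) := by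
    intro x; rw [← Real.rpow_natCast]; norm_num
  have h1 : ∑ j ∈ Finset.range n, ‖p.coeff j‖ ^ (2:ℝ)
      ≤ (∑ j ∈ Finset.range n, ‖p.coeff j‖) ^ (2:ℕ) := by
    simp_rw [hsq]
    exact Finset.sum_sq_le_sq_sum_of_nonneg (fun i _ => norm_nonneg _)
  have hS : (0:ℝ) ≤ ∑ j ∈ Finset.range n, ‖p.coeff j‖ :=
    Finset.sum_nonneg fun _ _ => norm_nonneg _
  calc (∑ j ∈ Finset.range n, ‖p.coeff j‖ ^ (2:ℝ)) ^ (1/(2:ℝ))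
      ≤ ((∑ j ∈ Finset.range n, ‖p.coeff j‖) ^ (2:ℕ)) ^ (1/(2:ℝ)) := by
        apply Real.rpow_le_rpow (Finset.sum_nonneg fun _ _ => Real.rpow_nonneg (norm_nonneg _) _) h1
        norm_num
    _ = ∑ j ∈ Finset.range n, ‖p.coeff j‖ := by
        rw [← Real.rpow_natCast _ 2, ← Real.rpow_mul hS]
        norm_num

/-- Inner product of two embedded polynomials. -/
lemma inner_emb (p q : ℂ[X]) (n : ℕ) (hp : p.natDegree < n) (hq : q.natDegree < n) :
    ⟪emb p, emb q⟫_ℂ = ∑ j ∈ Finset.range n, (starRingEnd ℂ) (p.coeff j) * q.coeff j := by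
  rw [lp.inner_eq_tsum]
  refine (tsum_eq_sum ?_).trans (Finset.sum_congr rfl fun k _ => by
    simp only [RCLike.inner_apply, emb_apply, mul_comm])
  intro k hk
  have hk' : n ≤ k := by have := Finset.mem_range.not.mp hk; omega
  have : q.coeff k = 0 := Polynomial.coeff_eq_zero_of_natDegree_lt (lt_of_lt_of_le hq hk')
  simp [RCLike.inner_apply, this]



/-- The symbol polynomial φ(z) = (z+2)/5. -/
def phip : ℂ[X] := C (5⁻¹ : ℂ) * (X + C 2)

/-- The weighted composition-differentiation operator on polynomials:
`p ↦ 2X · (p' ∘ φ)`. -/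
def DpL : ℂ[X] →ₗ[ℂ] ℂ[X] :=
  (LinearMap.mulLeft ℂ (C 2 * X : ℂ[X])).comp
    ((Polynomial.aeval phip).toLinearMap.comp (Polynomial.derivative : ℂ[X] →ₗ[ℂ] ℂ[X]))

lemma DpL_apply (p : ℂ[X]) : DpL p = C 2 * X * ((derivative p).comp phip) := by
  simp only [DpL, LinearMap.coe_comp, Function.comp_apply, AlgHom.toLinearMap_apply,
    LinearMap.mulLeft_apply, comp_eq_aeval, mul_assoc]

lemma DpL_X_pow (k : ℕ) :
    DpL (X ^ k) = ((2:ℂ) * k * 5⁻¹ ^ (k-1)) • (X * (X + C 2) ^ (k-1)) := by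
  rw [DpL_apply, derivative_X_pow, mul_comp, C_comp, X_pow_comp]
  simp only [phip, mul_pow, ← C_pow, smul_eq_C_mul, C_mul]
  ring

/-- Coordinate evaluation as a continuous linear functional on `H²`. -/
def coordCLM (k : ℕ) : H2 →L[ℂ] ℂ :=
  LinearMap.mkContinuous
    { toFun := fun f => f k
      map_add' := fun f g => by
        have := congrFun (lp.coeFn_add f g) k; simpa using this
      map_smul' := fun c f => by
        have := congrFun (lp.coeFn_smul c f) k; simpa using this } 1
    (fun f => by show ‖f k‖ ≤ 1 * ‖f‖; simpa using lp.norm_apply_le_norm (by norm_num) f k)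

@[simp] lemma coordCLM_apply (k : ℕ) (f : H2) : coordCLM k f = f k := rfl

lemma coordCLM_norm_le (k : ℕ) : ‖coordCLM k‖ ≤ 1 :=
  LinearMap.mkContinuous_norm_le _ zero_le_one _

/-- The image column vectors. -/
def vk (k : ℕ) : H2 := emb (DpL (X ^ k))

lemma emb_zero : emb 0 = 0 := by
  apply Subtype.ext; funext j
  show (0:ℂ[X]).coeff j = _
  simp

/-- The linear embedding. -/
def embL : ℂ[X] →ₗ[ℂ] H2 :=
  { toFun := emb, map_add' := emb_add, map_smul' := emb_smul }

lemma vk_norm_le (k : ℕ) : ‖vk k‖ ≤ 2 * k * (3/5 : ℝ) ^ (k - 1) := by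
  cases k with
  | zero =>
      have h1 : DpL ((X:ℂ[X]) ^ 0) = 0 := by
        have := DpL_X_pow 0
        simpa using this
      rw [vk, h1, emb_zero]
      simp
  | succ n =>
      rw [vk, DpL_X_pow]
      simp only [Nat.add_sub_cancel]
      set a : ℂ := (2:ℂ) * (↑(n+1)) * 5⁻¹ ^ n with ha
      set q : ℂ[X] := X * (X + C 2) ^ n with hq
      have hdeg : (a • q).natDegree < n + 2 := by
        apply lt_of_le_of_lt (Polynomial.natDegree_smul_le a q)
        have h2 : q.natDegree ≤ 1 + n * 1 := le_trans (Polynomial.natDegree_mul_le)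
          (add_le_add Polynomial.natDegree_X_le
            (le_trans (Polynomial.natDegree_pow_le)
              (Nat.mul_le_mul_left n (Polynomial.natDegree_X_add_C 2).le)))
        omega
      refine le_trans (emb_norm_le _ (n+2) hdeg) ?_
      have hcoeff0 : (a • q).coeff 0 = 0 := by
        simp [hq, Polynomial.coeff_smul, Polynomial.mul_coeff_zero]
      have hcoeffs : ∀ i, ‖(a • q).coeff (i+1)‖
          = ‖a‖ * ((2:ℝ) ^ (n - i) * (n.choose i : ℝ)) := by
        intro i
        rw [Polynomial.coeff_smul, hq, Polynomial.coeff_X_mul, Polynomial.coeff_X_add_C_pow]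
        rw [smul_eq_mul, norm_mul, norm_mul, norm_pow]
        simp [Complex.norm_natCast]
      rw [Finset.sum_range_succ']
      rw [hcoeff0]
      simp only [hcoeffs, norm_zero, add_zero]
      rw [← Finset.mul_sum]
      have hbin : ∑ i ∈ Finset.range (n+1), (2:ℝ) ^ (n - i) * (n.choose i : ℝ) = 3 ^ n := by
        have h3 : ((1:ℝ) + 2) ^ n = ∑ i ∈ Finset.range (n+1), (1:ℝ)^i * 2 ^ (n-i) * n.choose i :=
          add_pow 1 2 n
        simp only [one_pow, one_mul] at h3
        rw [← h3]; norm_num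
      rw [hbin]
      have hna : ‖a‖ = 2 * (↑(n+1):ℝ) * (5⁻¹:ℝ) ^ n := by
        rw [ha, norm_mul, norm_mul, norm_pow]
        norm_num [Complex.norm_natCast]
        exact_mod_cast Complex.norm_natCast (n+1)
      rw [hna]
      have : ((3:ℝ)/5) ^ n = (5⁻¹:ℝ)^n * 3^n := by
        rw [← mul_pow]; norm_num
      rw [this]
      push_cast
      apply le_of_eq
      ring

/-- The rank-one pieces. -/
def Tk (k : ℕ) : H2 →L[ℂ] H2 := (coordCLM k).smulRight (vk k)

lemma Tk_norm_le (k : ℕ) : ‖Tk k‖ ≤ 2 * k * (3/5 : ℝ) ^ (k - 1) := by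
  rw [Tk, ContinuousLinearMap.norm_smulRight_apply]
  calc ‖coordCLM k‖ * ‖vk k‖ ≤ 1 * (2 * k * (3/5 : ℝ) ^ (k - 1)) :=
        mul_le_mul (coordCLM_norm_le k) (vk_norm_le k) (norm_nonneg _) zero_le_one
    _ = _ := one_mul _

lemma summable_bnd : Summable (fun k : ℕ => 2 * (k:ℝ) * (3/5 : ℝ) ^ (k - 1)) := by
  have h : Summable (fun k : ℕ => (k:ℝ) ^ 1 * (3/5 : ℝ) ^ k) :=
    summable_pow_mul_geometric_of_norm_lt_one 1
      (by rw [Real.norm_eq_abs, _root_.abs_of_nonneg (by norm_num : (0:ℝ) ≤ 3/5)]; norm_num)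
  have h2 := h.mul_left (10/3 : ℝ)
  apply Summable.of_nonneg_of_le (fun k => by positivity) _ h2
  intro k
  cases k with
  | zero => simp
  | succ n =>
    apply le_of_eq
    have hc : ((n+1:ℕ):ℝ) = (n:ℝ) + 1 := by push_cast; ring
    simp only [Nat.add_sub_cancel, hc, pow_succ, pow_one]
    ring

lemma summable_Tk : Summable (fun k => Tk k) :=
  Summable.of_norm_bounded summable_bnd Tk_norm_le

/-- The operator `T = D_{2z, (z+2)/5}`. -/
def T : H2 →L[ℂ] H2 := ∑' k, Tk k

lemma summable_Tk_apply (f : H2) : Summable (fun k => Tk k f) :=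
  summable_Tk.map (ContinuousLinearMap.apply ℂ H2 f) (ContinuousLinearMap.apply ℂ H2 f).continuous

lemma T_apply (f : H2) : T f = ∑' k, (f k) • vk k := by
  have : T f = ∑' k, Tk k f :=
    (ContinuousLinearMap.apply ℂ H2 f).map_tsum summable_Tk
  rw [this]
  rfl

lemma T_emb (p : ℂ[X]) : T (emb p) = emb (DpL p) := by
  rw [T_apply]
  set n := p.natDegree + 1 with hn
  have hsum : (∑' k, ((emb p : ∀ _:ℕ, ℂ) k) • vk k)
      = ∑ k ∈ Finset.range n, (p.coeff k) • vk k := by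
    apply tsum_eq_sum
    intro k hk
    have hk' : p.natDegree < k := by
      have := Finset.mem_range.not.mp hk; omega
    have : p.coeff k = 0 := Polynomial.coeff_eq_zero_of_natDegree_lt hk'
    simp [this]
  rw [hsum]
  have step : ∀ k, (p.coeff k) • vk k = embL (DpL ((p.coeff k) • X ^ k)) := by
    intro k
    rw [map_smul, map_smul]
    rfl
  simp only [step]
  rw [← map_sum, ← map_sum]
  have hrep : (∑ k ∈ Finset.range n, (p.coeff k) • (X:ℂ[X]) ^ k) = p := by
    conv_rhs => rw [p.as_sum_range' n (by omega)]
    apply Finset.sum_congr rfl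
    intro k _
    rw [Polynomial.smul_X_eq_monomial]
  rw [hrep]
  rfl



lemma conj22 : ((2:ℝ≥0∞).toReal).HolderConjugate ((2:ℝ≥0∞).toReal) := by
  rw [two_toReal]
  exact ⟨by norm_num, by norm_num, by norm_num⟩

lemma memlp_geom {z : ℂ} (hz : ‖z‖ < 1) : Memℓp (fun k : ℕ => z ^ k) 2 := by
  apply memℓp_gen
  have : Summable (fun k : ℕ => (‖z‖ ^ 2) ^ k) := by
    apply summable_geometric_of_lt_one (by positivity)
    nlinarith [norm_nonneg z]
  apply Summable.congr this
  intro k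
  rw [two_toReal]
  rw [show ‖z^k‖ ^ (2:ℝ) = ‖z^k‖ ^ (2:ℕ) from by rw [← Real.rpow_natCast]; norm_num]
  rw [norm_pow, ← pow_mul, ← pow_mul, Nat.mul_comm]

/-- The kernel element. -/
def Kz (z : ℂ) (hz : ‖z‖ < 1) : H2 := ⟨fun k => z ^ k, memlp_geom hz⟩

lemma summable_eval {z : ℂ} (hz : ‖z‖ < 1) (f : H2) :
    Summable (fun k : ℕ => f k * z ^ k) := by
  have h := lp.summable_mul conj22 f (Kz z hz)
  apply Summable.of_norm
  apply h.congr
  intro k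
  rw [norm_mul]
  rfl

/-- Point evaluation on the disk as a continuous functional on `H²`. -/
def evCLM (z : ℂ) (hz : ‖z‖ < 1) : H2 →L[ℂ] ℂ :=
  LinearMap.mkContinuous
    { toFun := fun f => ∑' k, (f k) * z ^ k
      map_add' := fun f g => by
        simp only []
        have h1 := summable_eval hz f
        have h2 := summable_eval hz g
        rw [← Summable.tsum_add h1 h2]
        apply tsum_congr
        intro k
        have := congrFun (lp.coeFn_add f g) k
        simp only [Pi.add_apply] at this
        rw [this]
        ring
      map_smul' := fun c f => by
        simp only [RingHom.id_apply, smul_eq_mul]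
        rw [← tsum_mul_left]
        apply tsum_congr
        intro k
        have := congrFun (lp.coeFn_smul c f) k
        simp only [Pi.smul_apply, smul_eq_mul] at this
        rw [this]
        ring }
    ‖Kz z hz‖
    (fun f => by
      simp only [LinearMap.coe_mk, AddHom.coe_mk]
      calc ‖∑' k, (f k) * z ^ k‖ ≤ ∑' k, ‖(f k) * z ^ k‖ := by
            apply norm_tsum_le_tsum_norm
            have h := lp.summable_mul conj22 f (Kz z hz)
            apply h.congr; intro k; rw [norm_mul]; rfl
        _ ≤ ‖f‖ * ‖Kz z hz‖ := by
            have h := lp.tsum_mul_le_mul_norm' conj22 f (Kz z hz)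
            calc (∑' k, ‖(f k) * z ^ k‖) = ∑' k, ‖f k‖ * ‖(Kz z hz) k‖ := by
                  apply tsum_congr; intro k; rw [norm_mul]; rfl
              _ ≤ ‖f‖ * ‖Kz z hz‖ := h
        _ = ‖Kz z hz‖ * ‖f‖ := mul_comm _ _)

lemma evCLM_apply (z : ℂ) (hz : ‖z‖ < 1) (f : H2) :
    evCLM z hz f = ∑' k, (f k) * z ^ k := rfl

lemma evCLM_emb (z : ℂ) (hz : ‖z‖ < 1) (p : ℂ[X]) :
    evCLM z hz (emb p) = p.eval z := by
  rw [evCLM_apply]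
  rw [Polynomial.eval_eq_sum_range' (lt_add_one p.natDegree)]
  apply tsum_eq_sum
  intro k hk
  have hk' : p.natDegree < k := by have := Finset.mem_range.not.mp hk; omega
  simp [Polynomial.coeff_eq_zero_of_natDegree_lt hk']


lemma eval_DpL_X_pow (z : ℂ) (k : ℕ) :
    (DpL (X ^ k)).eval z = 2 * z * (k * ((z+2)/5) ^ (k-1)) := by
  rw [DpL_X_pow]
  simp only [eval_smul, eval_mul, eval_pow, eval_add, eval_X, eval_C, smul_eq_mul]
  rw [div_pow, inv_pow]
  have h5 : ((5:ℂ) ^ (k-1)) ≠ 0 := pow_ne_zero _ (by norm_num)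
  field_simp

lemma hasDerivAt_toFun (f : H2) {w : ℂ} (hw : ‖w‖ < 3/5) :
    HasDerivAt (H2.toFun f) (∑' k : ℕ, f k * (k * w ^ (k-1))) w := by
  have hsum_bnd : Summable (fun k : ℕ => ‖f‖ * (2 * (k:ℝ) * (3/5:ℝ)^(k-1))) :=
    summable_bnd.mul_left _
  have h := hasDerivAt_tsum_of_isPreconnected hsum_bnd (isOpen_ball (x := (0:ℂ)) (ε := 3/5))
      ((convex_ball (0:ℂ) (3/5)).isPreconnected)
      (g := fun (k:ℕ) (y:ℂ) => f k * y ^ k)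
      (g' := fun (k:ℕ) (y:ℂ) => f k * (k * y ^ (k-1)))
      (fun k y _ => by simpa using ((hasDerivAt_pow k y).const_mul (f k : ℂ)))
      ?_ (mem_ball_self (by norm_num)) ?_ (mem_ball_zero_iff.mpr hw)
  · exact h
  · intro k y hy
    rw [norm_mul, norm_mul, norm_pow, Complex.norm_natCast]
    have h1 : ‖f k‖ ≤ ‖f‖ := lp.norm_apply_le_norm (by norm_num) f k
    have hyb : ‖y‖ ≤ 3/5 := le_of_lt (mem_ball_zero_iff.mp hy)
    have h2 : ‖y‖ ^ (k-1) ≤ (3/5:ℝ)^(k-1) := pow_le_pow_left₀ (norm_nonneg _) hyb _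
    have h3 : ‖f k‖ * ((k:ℝ) * ‖y‖^(k-1)) ≤ ‖f‖ * ((k:ℝ) * (3/5:ℝ)^(k-1)) := by
      apply mul_le_mul h1 _ (by positivity) (norm_nonneg _)
      exact mul_le_mul_of_nonneg_left h2 (Nat.cast_nonneg k)
    refine le_trans h3 ?_
    have h4 : (k:ℝ) * (3/5:ℝ)^(k-1) ≤ 2 * (k:ℝ) * (3/5:ℝ)^(k-1) := by
      nlinarith [pow_nonneg (by norm_num : (0:ℝ) ≤ 3/5) (k-1), Nat.cast_nonneg (α := ℝ) k]
    exact mul_le_mul_of_nonneg_left h4 (norm_nonneg _)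
  · apply summable_of_ne_finset_zero (s := {0})
    intro k hk
    have : k ≠ 0 := by simpa using hk
    simp [zero_pow this]

lemma summable_smul_vk (f : H2) : Summable (fun k => (f k) • vk k) := by
  have h := summable_Tk_apply f
  apply h.congr
  intro k
  rfl

lemma isWCD_T : IsWCD (fun z => 2 * z) (fun z => (z + 2) / 5) 1 T := by
  intro f z hz
  have hz1 : ‖z‖ < 1 := mem_ball_zero_iff.mp hz
  have hw : ‖(z+2)/5‖ < 3/5 := by
    rw [norm_div]
    have h2 : ‖(5:ℂ)‖ = 5 := by norm_num
    rw [h2]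
    have : ‖z + 2‖ < 3 := by
      calc ‖z + 2‖ ≤ ‖z‖ + ‖(2:ℂ)‖ := norm_add_le _ _
        _ < 3 := by rw [show ‖(2:ℂ)‖ = 2 by norm_num]; linarith
    linarith
  have hD := hasDerivAt_toFun f hw
  have hL : H2.toFun (T f) z = evCLM z hz1 (T f) := rfl
  rw [hL, T_apply]
  rw [ContinuousLinearMap.map_tsum _ (summable_smul_vk f)]
  have hterm : ∀ k : ℕ, evCLM z hz1 ((f k) • vk k)
      = 2 * z * ((f k) * (k * ((z+2)/5) ^ (k-1))) := by
    intro k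
    rw [map_smul, smul_eq_mul, vk, evCLM_emb, eval_DpL_X_pow]
    ring
  rw [tsum_congr hterm]
  rw [tsum_mul_left]
  rw [iteratedDeriv_one, hD.deriv]

/-! ### The witness family for non-posinormality -/

/-- `pN = (X - 2/5)^(N+1)`. -/
def pw (N : ℕ) : ℂ[X] := (X + C (-(2/5) : ℂ)) ^ (N + 1)

lemma comp_phip_key : ((X + C (-(2/5) : ℂ))).comp phip = C (5⁻¹ : ℂ) * X := by
  rw [add_comp, X_comp, C_comp, phip]
  rw [mul_add, ← C_mul, add_assoc, ← C_add]
  norm_num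

lemma DpL_pw (N : ℕ) :
    DpL (pw N) = ((2:ℂ) * ((N+1 : ℕ) : ℂ) * 5⁻¹ ^ N) • X ^ (N + 1) := by
  rw [pw, DpL_apply, derivative_pow, derivative_X_add_C, mul_one, Nat.add_sub_cancel]
  rw [mul_comp, C_comp, pow_comp, comp_phip_key]
  rw [mul_pow, ← C_pow, smul_eq_C_mul]
  simp only [C_mul]
  ring

/-- The test-function polynomial. -/
def fw (N : ℕ) : ℂ[X] :=
  ∑ m ∈ Finset.range (N + 1),
    ((pw N).coeff (m+1) * 5 ^ (m+1) / (5 * (m+1))) • ((X + C (-(2/5) : ℂ)) ^ (m + 1))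

/-- The shifted-coefficient polynomial. -/
def qw (N : ℕ) : ℂ[X] :=
  ∑ m ∈ Finset.range (N + 1), C ((pw N).coeff (m+1)) * X ^ m

lemma DpL_fw (N : ℕ) : DpL (fw N) = C 2 * X * qw N := by
  rw [fw, map_sum, qw, Finset.mul_sum]
  apply Finset.sum_congr rfl
  intro m _
  rw [map_smul, DpL_apply, derivative_pow, derivative_X_add_C, mul_one, Nat.add_sub_cancel]
  rw [mul_comp, C_comp, pow_comp, comp_phip_key]
  have hm : ((m:ℂ) + 1) ≠ 0 := by
    have := Nat.cast_ne_zero (R := ℂ).mpr (Nat.succ_ne_zero m)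
    push_cast at this
    exact this
  have h5 : (5:ℂ) ≠ 0 := by norm_num
  have h5m : (5:ℂ) ^ m ≠ 0 := pow_ne_zero _ h5
  rw [mul_pow, ← C_pow, smul_eq_C_mul]
  push_cast
  rw [show (C ((pw N).coeff (m+1) * 5 ^ (m+1) / (5 * ((m:ℂ) + 1))) : ℂ[X]) *
      (C 2 * X * (C ((m:ℂ) + 1) * (C (5⁻¹ ^ m) * X ^ m)))
      = C ((pw N).coeff (m+1) * 5 ^ (m+1) / (5 * ((m:ℂ)+1)) * ((m:ℂ)+1) * 5⁻¹ ^ m * 2)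
        * (X * X ^ m) from by simp only [C_mul]; ring,
    show (pw N).coeff (m+1) * 5 ^ (m+1) / (5 * ((m:ℂ)+1)) * ((m:ℂ)+1) * 5⁻¹ ^ m * 2
      = 2 * (pw N).coeff (m+1) from by
        rw [pow_succ, inv_pow]
        field_simp,
    show (C (2 * (pw N).coeff (m+1)) : ℂ[X]) * (X * X ^ m)
      = C 2 * X * (C ((pw N).coeff (m+1)) * X ^ m) from by simp only [C_mul]; ring]

lemma norm_coeff_pw (N j : ℕ) :
    ‖(pw N).coeff j‖ = (2/5:ℝ)^(N+1-j) * ((N+1).choose j : ℝ) := by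
  rw [pw, coeff_X_add_C_pow, norm_mul, norm_pow]
  congr 1
  · congr 1
    rw [show (-(2/5):ℂ) = ((-(2/5):ℝ):ℂ) by norm_num, Complex.norm_real, Real.norm_eq_abs]
    norm_num
  · exact Complex.norm_natCast _

lemma natDegree_pw_lt (N : ℕ) : (pw N).natDegree < N + 2 := by
  apply lt_of_le_of_lt (Polynomial.natDegree_pow_le)
  have : (X + C (-(2/5):ℂ)).natDegree = 1 := Polynomial.natDegree_X_add_C _
  rw [this, mul_one]
  omega

lemma norm_emb_X_pow_le (n : ℕ) : ‖emb ((X:ℂ[X]) ^ n)‖ ≤ 1 := by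
  refine le_trans (emb_norm_le _ (n+1) (by rw [Polynomial.natDegree_X_pow]; omega)) ?_
  simp only [Polynomial.coeff_X_pow, apply_ite norm, norm_one, norm_zero]
  rw [Finset.sum_ite_eq']
  simp

lemma norm_T_emb_pw (N : ℕ) :
    ‖T (emb (pw N))‖ ≤ 2 * ((N:ℝ)+1) * (1/5:ℝ)^N := by
  rw [T_emb, DpL_pw, emb_smul, norm_smul]
  have h1 : ‖(2:ℂ) * ((N+1 : ℕ) : ℂ) * 5⁻¹ ^ N‖ = 2 * ((N:ℝ)+1) * (1/5:ℝ)^N := by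
    rw [norm_mul, norm_mul, norm_pow]
    have h2 : ‖((N+1:ℕ):ℂ)‖ = ((N+1:ℕ):ℝ) := Complex.norm_natCast _
    push_cast at h2 ⊢
    rw [h2]
    norm_num
  rw [h1]
  calc 2 * ((N:ℝ)+1) * (1/5:ℝ)^N * ‖emb ((X:ℂ[X]) ^ (N+1))‖
      ≤ 2 * ((N:ℝ)+1) * (1/5:ℝ)^N * 1 := by
        apply mul_le_mul_of_nonneg_left (norm_emb_X_pow_le _) (by positivity)
    _ = 2 * ((N:ℝ)+1) * (1/5:ℝ)^N := mul_one _

lemma coeff_qw (N m : ℕ) (hm : m < N + 1) : (qw N).coeff m = (pw N).coeff (m+1) := by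
  rw [qw, Polynomial.finset_sum_coeff]
  simp only [Polynomial.coeff_C_mul, Polynomial.coeff_X_pow, mul_ite, mul_one, mul_zero]
  rw [Finset.sum_ite_eq]
  simp [Finset.mem_range.mpr hm]

lemma natDegree_qw_le (N : ℕ) : (qw N).natDegree ≤ N := by
  apply Polynomial.natDegree_sum_le_of_forall_le
  intro m hm
  refine le_trans (Polynomial.natDegree_mul_le) ?_
  rw [Polynomial.natDegree_C]
  have := Finset.mem_range.mp hm
  rw [Polynomial.natDegree_X_pow]
  omega

lemma inner_pw_T_fw (N : ℕ) :
    ⟪emb (pw N), T (emb (fw N))⟫_ℂ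
      = ((2 * ∑ m ∈ Finset.range (N+1), ‖(pw N).coeff (m+1)‖^2 : ℝ) : ℂ) := by
  rw [T_emb, DpL_fw]
  have hd2 : (C (2:ℂ) * X * qw N).natDegree < N + 2 := by
    refine lt_of_le_of_lt (Polynomial.natDegree_mul_le) ?_
    have ha : (C (2:ℂ) * X).natDegree ≤ 1 := by
      refine le_trans (Polynomial.natDegree_mul_le) ?_
      rw [Polynomial.natDegree_C, Polynomial.natDegree_X]
    have := natDegree_qw_le N
    omega
  rw [inner_emb _ _ (N+2) (natDegree_pw_lt N) hd2]
  have hc0 : (C (2:ℂ) * X * qw N).coeff 0 = 0 := by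
    rw [Polynomial.mul_coeff_zero, Polynomial.mul_coeff_zero]
    simp
  have hcs : ∀ m, m < N + 1 → (C (2:ℂ) * X * qw N).coeff (m+1) = 2 * (pw N).coeff (m+1) := by
    intro m hm
    rw [mul_assoc, Polynomial.coeff_C_mul, Polynomial.coeff_X_mul, coeff_qw N m hm]
  rw [Finset.sum_range_succ', hc0, mul_zero, add_zero]
  push_cast
  rw [Finset.mul_sum]
  apply Finset.sum_congr rfl
  intro m hm
  rw [hcs m (Finset.mem_range.mp hm)]
  set c := (pw N).coeff (m+1)
  rw [mul_comm ((starRingEnd ℂ) c) (2 * c), mul_assoc, Complex.mul_conj]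
  rw [Complex.normSq_eq_norm_sq]
  push_cast
  ring

lemma pw_eq (m : ℕ) : (X + C (-(2/5) : ℂ)) ^ (m + 1) = pw m := rfl

lemma norm_emb_pw_le (m : ℕ) : ‖emb (pw m)‖ ≤ (7/5:ℝ)^(m+1) := by
  refine le_trans (emb_norm_le _ (m+2) (natDegree_pw_lt m)) ?_
  calc ∑ j ∈ Finset.range (m+2), ‖(pw m).coeff j‖
      = ∑ j ∈ Finset.range (m+2), (1:ℝ)^j * (2/5:ℝ)^(m+1-j) * ((m+1).choose j : ℝ) := by
        apply Finset.sum_congr rfl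
        intro j _
        rw [norm_coeff_pw]
        ring
    _ = ((1:ℝ) + 2/5)^(m+1) := (add_pow (1:ℝ) (2/5) (m+1)).symm
    _ ≤ (7/5:ℝ)^(m+1) := by norm_num

lemma norm_emb_fw_le (N : ℕ) :
    ‖emb (fw N)‖ ≤ (1/5:ℝ) * ∑ m ∈ Finset.range (N+1), ‖(pw N).coeff (m+1)‖ * 7^(m+1) := by
  rw [fw]
  have hemb : emb (∑ m ∈ Finset.range (N+1),
        ((pw N).coeff (m+1) * 5 ^ (m+1) / (5 * (m+1))) • ((X + C (-(2/5) : ℂ)) ^ (m + 1)))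
      = ∑ m ∈ Finset.range (N+1),
        ((pw N).coeff (m+1) * 5 ^ (m+1) / (5 * (m+1))) • emb ((X + C (-(2/5) : ℂ)) ^ (m + 1)) := by
    show embL _ = _
    rw [map_sum]
    simp only [map_smul]
    rfl
  rw [hemb, Finset.mul_sum]
  refine le_trans (norm_sum_le _ _) (Finset.sum_le_sum ?_)
  intro m _
  rw [norm_smul, pw_eq]
  have hs : ‖(pw N).coeff (m+1) * 5^(m+1) / (5*((m:ℂ)+1))‖
      ≤ ‖(pw N).coeff (m+1)‖ * 5^m := by
    rw [norm_div, norm_mul]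
    have h1 : ‖(5:ℂ)^(m+1)‖ = (5:ℝ)^(m+1) := by
      rw [norm_pow]; norm_num
    have h2 : (5:ℝ) ≤ ‖(5:ℂ)*((m:ℂ)+1)‖ := by
      rw [norm_mul]
      have : ‖(5:ℂ)‖ = 5 := by norm_num
      rw [this]
      have hm1 : (1:ℝ) ≤ ‖(m:ℂ)+1‖ := by
        have : ((m:ℂ)+1) = ((m+1:ℕ):ℂ) := by push_cast; ring
        rw [this, Complex.norm_natCast]
        exact_mod_cast Nat.one_le_iff_ne_zero.mpr (Nat.succ_ne_zero m)
      nlinarith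
    rw [h1]
    calc ‖(pw N).coeff (m+1)‖ * (5:ℝ)^(m+1) / ‖(5:ℂ)*((m:ℂ)+1)‖
        ≤ ‖(pw N).coeff (m+1)‖ * (5:ℝ)^(m+1) / 5 := by
          apply div_le_div_of_nonneg_left _ (by norm_num) h2
          positivity
      _ = ‖(pw N).coeff (m+1)‖ * 5^m := by rw [pow_succ]; ring
  calc ‖(pw N).coeff (m+1) * 5^(m+1) / (5*((m:ℂ)+1))‖ * ‖emb (pw m)‖
      ≤ (‖(pw N).coeff (m+1)‖ * 5^m) * (7/5:ℝ)^(m+1) :=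
        mul_le_mul hs (norm_emb_pw_le m) (norm_nonneg _) (by positivity)
    _ = 1/5 * (‖(pw N).coeff (m+1)‖ * 7^(m+1)) := by
        rw [div_pow, pow_succ (5:ℝ)]
        field_simp

lemma B_le (N : ℕ) :
    ∑ m ∈ Finset.range (N+1), ‖(pw N).coeff (m+1)‖ * 7^(m+1) ≤ (37/5:ℝ)^(N+1) := by
  have hfull : ∑ j ∈ Finset.range (N+2), (7:ℝ)^j * (2/5:ℝ)^(N+1-j) * ((N+1).choose j : ℝ)
      = ((7:ℝ) + 2/5)^(N+1) := (add_pow (7:ℝ) (2/5) (N+1)).symm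
  rw [Finset.sum_range_succ'] at hfull
  have hterm : ∀ m, ‖(pw N).coeff (m+1)‖ * 7^(m+1)
      = (7:ℝ)^(m+1) * (2/5:ℝ)^(N+1-(m+1)) * ((N+1).choose (m+1) : ℝ) := by
    intro m
    rw [norm_coeff_pw]
    ring
  calc ∑ m ∈ Finset.range (N+1), ‖(pw N).coeff (m+1)‖ * 7^(m+1)
      = ∑ m ∈ Finset.range (N+1), (7:ℝ)^(m+1) * (2/5:ℝ)^(N+1-(m+1)) * ((N+1).choose (m+1) : ℝ) :=
        Finset.sum_congr rfl (fun m _ => hterm m)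
    _ ≤ ((7:ℝ) + 2/5)^(N+1) := by
        rw [← hfull]
        have h0 : (0:ℝ) ≤ (7:ℝ)^0 * (2/5:ℝ)^(N+1-0) * ((N+1).choose 0 : ℝ) := by positivity
        linarith
    _ = (37/5:ℝ)^(N+1) := by norm_num

lemma L_ge (N : ℕ) :
    (7/5:ℝ)^(N+1) - 1 ≤ ∑ m ∈ Finset.range (N+1), ‖(pw N).coeff (m+1)‖ := by
  have hfull : ∑ j ∈ Finset.range (N+2), (1:ℝ)^j * (2/5:ℝ)^(N+1-j) * ((N+1).choose j : ℝ)
      = ((1:ℝ) + 2/5)^(N+1) := (add_pow (1:ℝ) (2/5) (N+1)).symm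
  rw [Finset.sum_range_succ'] at hfull
  have hterm : ∀ m, ‖(pw N).coeff (m+1)‖
      = (1:ℝ)^(m+1) * (2/5:ℝ)^(N+1-(m+1)) * ((N+1).choose (m+1) : ℝ) := by
    intro m
    rw [norm_coeff_pw]
    ring
  have h0 : (1:ℝ)^0 * (2/5:ℝ)^(N+1-0) * ((N+1).choose 0 : ℝ) ≤ 1 := by
    simp only [pow_zero, one_mul, Nat.sub_zero, Nat.choose_zero_right, Nat.cast_one, mul_one]
    apply pow_le_one₀ (by norm_num) (by norm_num)
  have h75 : ((1:ℝ) + 2/5)^(N+1) = (7/5:ℝ)^(N+1) := by norm_num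
  calc (7/5:ℝ)^(N+1) - 1
      ≤ ((1:ℝ) + 2/5)^(N+1) - ((1:ℝ)^0 * (2/5:ℝ)^(N+1-0) * ((N+1).choose 0 : ℝ)) := by
        rw [h75]; linarith
    _ = ∑ m ∈ Finset.range (N+1), (1:ℝ)^(m+1) * (2/5:ℝ)^(N+1-(m+1)) * ((N+1).choose (m+1) : ℝ) := by
        linarith [hfull]
    _ = ∑ m ∈ Finset.range (N+1), ‖(pw N).coeff (m+1)‖ :=
        Finset.sum_congr rfl (fun m _ => (hterm m).symm)

lemma S_ge (N : ℕ) :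
    ((7/5:ℝ)^(N+1) - 1)^2
      ≤ ((N:ℝ)+1) * ∑ m ∈ Finset.range (N+1), ‖(pw N).coeff (m+1)‖^2 := by
  have h1 : ((7/5:ℝ)^(N+1) - 1)^2 ≤ (∑ m ∈ Finset.range (N+1), ‖(pw N).coeff (m+1)‖)^2 := by
    apply pow_le_pow_left₀ _ (L_ge N)
    have : (1:ℝ) ≤ (7/5:ℝ)^(N+1) := one_le_pow₀ (by norm_num)
    linarith
  refine le_trans h1 ?_
  have h2 := sq_sum_le_card_mul_sum_sq (s := Finset.range (N+1))
    (f := fun m => ‖(pw N).coeff (m+1)‖)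
  rw [Finset.card_range] at h2
  exact_mod_cast h2

lemma pos_ineq (h : Posinormal T) :
    ∃ K : ℝ, 0 ≤ K ∧ ∀ x f : H2, ‖⟪x, T f⟫_ℂ‖ ≤ K * ‖T x‖ * ‖f‖ := by
  obtain ⟨P, _hP, hEq⟩ := h
  refine ⟨Real.sqrt ‖P‖, Real.sqrt_nonneg _, fun x f => ?_⟩
  set Ts := ContinuousLinearMap.adjoint T with hTs
  have h1 : ⟪x, T f⟫_ℂ = ⟪Ts x, f⟫_ℂ := (ContinuousLinearMap.adjoint_inner_left T f x).symm
  have h3 : ‖Ts x‖^2 ≤ ‖P‖ * ‖T x‖^2 := by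
    have e0 : (⟪Ts x, Ts x⟫_ℂ) = ((‖Ts x‖:ℂ))^2 := inner_self_eq_norm_sq_to_K (Ts x)
    have e1 : (⟪Ts x, Ts x⟫_ℂ) = ⟪x, T (Ts x)⟫_ℂ :=
      ContinuousLinearMap.adjoint_inner_left T (Ts x) x
    have e2 : T (Ts x) = Ts (P (T x)) := by
      have := congrFun (congrArg DFunLike.coe hEq) x
      simpa using this
    have e3 : ⟪x, Ts (P (T x))⟫_ℂ = ⟪T x, P (T x)⟫_ℂ :=
      ContinuousLinearMap.adjoint_inner_right T x (P (T x))
    have e4 : ‖Ts x‖^2 = ‖(⟪T x, P (T x)⟫_ℂ)‖ := by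
      rw [← e3, ← e2, ← e1, e0]
      rw [norm_pow, Complex.norm_real]
      rw [Real.norm_eq_abs, abs_norm]
    rw [e4]
    calc ‖(⟪T x, P (T x)⟫_ℂ)‖ ≤ ‖T x‖ * ‖P (T x)‖ := norm_inner_le_norm _ _
      _ ≤ ‖T x‖ * (‖P‖ * ‖T x‖) := by
          apply mul_le_mul_of_nonneg_left (P.le_opNorm (T x)) (norm_nonneg _)
      _ = ‖P‖ * ‖T x‖^2 := by ring
  have h4 : ‖Ts x‖ ≤ Real.sqrt ‖P‖ * ‖T x‖ := by
    have h5 := Real.sqrt_le_sqrt h3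
    rwa [Real.sqrt_sq (norm_nonneg _), Real.sqrt_mul (norm_nonneg P), Real.sqrt_sq (norm_nonneg _)]
      at h5
  calc ‖⟪x, T f⟫_ℂ‖ = ‖⟪Ts x, f⟫_ℂ‖ := by rw [h1]
    _ ≤ ‖Ts x‖ * ‖f‖ := norm_inner_le_norm _ _
    _ ≤ (Real.sqrt ‖P‖ * ‖T x‖) * ‖f‖ := mul_le_mul_of_nonneg_right h4 (norm_nonneg f)
    _ = _ := by ring

lemma not_posinormal_T : ¬ Posinormal T := by
  intro h
  obtain ⟨K, hK0, hKey⟩ := pos_ineq h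
  have master : ∀ N : ℕ, ((7/5:ℝ)^(N+1) - 1)^2 ≤ K * ((N:ℝ)+1)^2 * (37/25:ℝ)^(N+1) := by
    intro N
    set S := ∑ m ∈ Finset.range (N+1), ‖(pw N).coeff (m+1)‖^2 with hSdef
    have hS0 : 0 ≤ S := Finset.sum_nonneg (fun m _ => by positivity)
    have h37 : (37/25:ℝ)^(N+1) = (37/5:ℝ)^(N+1) * ((1/5:ℝ)^N * (1/5)) := by
      rw [show (37/5:ℝ)^(N+1) * ((1/5:ℝ)^N * (1/5)) = ((37/5:ℝ)*(1/5))^(N+1) from by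
        rw [mul_pow, pow_succ]; ring]
      norm_num
    have hfw2 : ‖emb (fw N)‖ ≤ (1/5:ℝ) * (37/5:ℝ)^(N+1) := by
      refine le_trans (norm_emb_fw_le N) ?_
      exact mul_le_mul_of_nonneg_left (B_le N) (by norm_num)
    have hIneq : 2 * S ≤ K * (2*((N:ℝ)+1)*(1/5:ℝ)^N) * ((1/5:ℝ)*(37/5:ℝ)^(N+1)) := by
      have hI := hKey (emb (pw N)) (emb (fw N))
      rw [inner_pw_T_fw] at hI
      rw [Complex.norm_real, Real.norm_eq_abs, _root_.abs_of_nonneg (by positivity)] at hI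
      refine le_trans hI ?_
      have step1 : K * ‖T (emb (pw N))‖ ≤ K * (2*((N:ℝ)+1)*(1/5:ℝ)^N) :=
        mul_le_mul_of_nonneg_left (norm_T_emb_pw N) hK0
      exact mul_le_mul step1 hfw2 (norm_nonneg _) (by positivity)
    have hS_le : S ≤ K * ((N:ℝ)+1) * (37/25:ℝ)^(N+1) := by
      have hRHS : K * (2*((N:ℝ)+1)*(1/5:ℝ)^N) * ((1/5:ℝ)*(37/5:ℝ)^(N+1))
          = 2*(K * ((N:ℝ)+1) * (37/25:ℝ)^(N+1)) := by
        rw [h37]; ring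
      rw [hRHS] at hIneq
      linarith
    refine le_trans (S_ge N) ?_
    have := mul_le_mul_of_nonneg_left hS_le (by positivity : (0:ℝ) ≤ (N:ℝ)+1)
    calc ((N:ℝ)+1) * S ≤ ((N:ℝ)+1) * (K * ((N:ℝ)+1) * (37/25:ℝ)^(N+1)) := this
      _ = K * ((N:ℝ)+1)^2 * (37/25:ℝ)^(N+1) := by ring
  have hr : (1:ℝ) < 49/37 := by norm_num
  have htend := tendsto_pow_const_div_const_pow_of_one_lt 2 hr
  have hev : ∀ᶠ n : ℕ in Filter.atTop, (n:ℝ)^2 / (49/37:ℝ)^n < 1/(4*K+1) :=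
    htend.eventually (gt_mem_nhds (by positivity))
  obtain ⟨n, hn⟩ := (hev.and (Filter.eventually_ge_atTop 3)).exists
  obtain ⟨hsmall, hn3⟩ := hn
  have hM := master (n-1)
  have hcast : ((n-1:ℕ):ℝ) + 1 = (n:ℝ) := by
    rw [Nat.cast_sub (by omega)]; ring
  rw [show (n-1) + 1 = n from by omega, hcast] at hM
  have h2n : (2:ℝ) ≤ (7/5:ℝ)^n := by
    calc (2:ℝ) ≤ (7/5:ℝ)^3 := by norm_num
      _ ≤ (7/5:ℝ)^n := pow_le_pow_right₀ (by norm_num) hn3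
  have hL2 : ((49/25:ℝ))^n / 4 ≤ ((7/5:ℝ)^n - 1)^2 := by
    have hx : ((49/25:ℝ))^n = ((7/5:ℝ)^n)^2 := by
      rw [show (49/25:ℝ) = (7/5:ℝ)^2 by norm_num, pow_right_comm]
    rw [hx]
    nlinarith [h2n]
  have hsplit : (49/25:ℝ)^n = (49/37:ℝ)^n * (37/25:ℝ)^n := by
    rw [← mul_pow]; norm_num
  have hpos : (0:ℝ) < (37/25:ℝ)^n := by positivity
  have hq : (0:ℝ) < (49/37:ℝ)^n := by positivity
  have hfin : (49/37:ℝ)^n ≤ 4*K*(n:ℝ)^2 := by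
    have hchain := le_trans hL2 hM
    rw [hsplit] at hchain
    have h4 : (49/37:ℝ)^n * (37/25:ℝ)^n ≤ 4 * (K * (n:ℝ)^2 * (37/25:ℝ)^n) := by linarith
    have h5 : (49/37:ℝ)^n * (37/25:ℝ)^n ≤ (4 * K * (n:ℝ)^2) * (37/25:ℝ)^n := by
      calc (49/37:ℝ)^n * (37/25:ℝ)^n ≤ 4 * (K * (n:ℝ)^2 * (37/25:ℝ)^n) := h4
        _ = (4 * K * (n:ℝ)^2) * (37/25:ℝ)^n := by ring
    exact le_of_mul_le_mul_right h5 hpos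
  rw [div_lt_div_iff₀ hq (by positivity : (0:ℝ) < 4*K+1)] at hsmall
  nlinarith [hfin, hsmall, hq, hK0, sq_nonneg ((n:ℝ))]

end Stage

/-- With `ψ(z) = 2z` and `φ(z) = (z+2)/5`: `D_{ψ,φ}` is bounded on `H²(𝔻)` and `ψ(0) = 0`,
yet `D_{ψ,φ}` is not posinormal. So the vanishing conditions of Theorem 2.7 are
necessary but not sufficient for posinormality. -/
theorem stmt18 :
    (2 * (0 : ℂ) = 0) ∧
    ∃ T : H2 →L[ℂ] H2,
      IsWCD (fun z => 2 * z) (fun z => (z + 2) / 5) 1 T ∧ ¬ Posinormal T := by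
  exact ⟨by ring, Stage.T, Stage.isWCD_T, Stage.not_posinormal_T⟩
end
end
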